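/- Let λ be a nonzero σ-finite measure on a measurable space V, E a finite-dimensional real normed vector space, Ψ : V → E measurable, and Ω = {Z ∈ E* : ∫ exp(−⟨Z, Ψ(x)⟩) λ(dx) < ∞}. Assume that the values of Ψ are not λ-almost everywhere contained in any affine hyperplane of E, i.e. there is no nonzero W ∈ E* and c ∈ ℝ with ⟨W, Ψ(x)⟩ = c for λ-almost every x. Then the function Z ↦ log I₀(Z) is strictly convex on Ω: for distinct Z₀, Z₁ ∈ Ω and t ∈ (0,1), log I₀((1−t)Z₀ + tZ₁) < (1−t) log I₀(Z₀) + t log I₀(Z₁). -/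

import Mathlib

open MeasureTheory

/-- If `λ ≠ 0` and the values of `Ψ` are not `λ`-almost everywhere contained in any
affine hyperplane of `E`, then the log-partition function `Z ↦ log I₀(Z)` is strictly
convex on the set `Ω` of those `Z` for which `I₀(Z)` is finite. -/
theorem log_partition_strictConvexOn
    {V : Type*} [MeasurableSpace V] (lam : Measure V) [SigmaFinite lam]
    (hlam : lam ≠ 0)
    {E : Type*} [NormedAddCommGroup E] [NormedSpace ℝ E] [FiniteDimensional ℝ E]
    [MeasurableSpace E] [BorelSpace E]
    (Ψ : V → E) (hΨ : Measurable Ψ)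
    (hhyp : ¬ ∃ (W : E →L[ℝ] ℝ) (c : ℝ), W ≠ 0 ∧ ∀ᵐ x ∂lam, W (Ψ x) = c)
    (Z₀ Z₁ : E →L[ℝ] ℝ) (hZ : Z₀ ≠ Z₁)
    (h₀ : ∫⁻ x, ENNReal.ofReal (Real.exp (-(Z₀ (Ψ x)))) ∂lam < ⊤)
    (h₁ : ∫⁻ x, ENNReal.ofReal (Real.exp (-(Z₁ (Ψ x)))) ∂lam < ⊤)
    (t : ℝ) (ht : t ∈ Set.Ioo (0 : ℝ) 1) :
    Real.log (∫ x, Real.exp (-(((1 - t) • Z₀ + t • Z₁) (Ψ x))) ∂lam) <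
      (1 - t) * Real.log (∫ x, Real.exp (-(Z₀ (Ψ x))) ∂lam) +
        t * Real.log (∫ x, Real.exp (-(Z₁ (Ψ x))) ∂lam) := by
  obtain ⟨ht0, ht1⟩ := ht
  set f : V → ℝ := fun x => Real.exp (-(Z₀ (Ψ x))) with hf_def
  set g : V → ℝ := fun x => Real.exp (-(Z₁ (Ψ x))) with hg_def
  set φ : V → ℝ := fun x => Real.exp ((Z₀ - Z₁) (Ψ x)) with hφ_def
  have hfpos : ∀ x, 0 < f x := fun x => Real.exp_pos _
  have hgpos : ∀ x, 0 < g x := fun x => Real.exp_pos _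
  have hφpos : ∀ x, 0 < φ x := fun x => Real.exp_pos _
  have hfm : Measurable f := Real.measurable_exp.comp (Z₀.continuous.measurable.comp hΨ).neg
  have hgm : Measurable g := Real.measurable_exp.comp (Z₁.continuous.measurable.comp hΨ).neg
  have hφm : Measurable φ := Real.measurable_exp.comp ((Z₀ - Z₁).continuous.measurable.comp hΨ)
  -- pointwise identities
  have hφf : ∀ x, φ x * f x = g x := by
    intro x
    simp only [hφ_def, hf_def, hg_def, ContinuousLinearMap.sub_apply, ← Real.exp_add]
    ring_nf
  have hφtf : ∀ x, φ x ^ t * f x = Real.exp (-(((1 - t) • Z₀ + t • Z₁) (Ψ x))) := by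
    intro x
    simp only [hφ_def, hf_def, ContinuousLinearMap.sub_apply, ContinuousLinearMap.add_apply,
      ContinuousLinearMap.smul_apply, smul_eq_mul, ← Real.exp_mul, ← Real.exp_add]
    ring_nf
  have hfgt : ∀ x, φ x ^ t * f x = f x ^ (1 - t) * g x ^ t := by
    intro x
    simp only [hφ_def, hf_def, hg_def, ContinuousLinearMap.sub_apply, ← Real.exp_mul,
      ← Real.exp_add]
    ring_nf
  -- integrability of f and g
  have hfint : Integrable f lam :=
    ⟨hfm.aestronglyMeasurable,
      (hasFiniteIntegral_iff_ofReal (Filter.Eventually.of_forall fun x => (hfpos x).le)).2 h₀⟩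
  have hgint : Integrable g lam :=
    ⟨hgm.aestronglyMeasurable,
      (hasFiniteIntegral_iff_ofReal (Filter.Eventually.of_forall fun x => (hgpos x).le)).2 h₁⟩
  set A : ℝ := ∫ x, f x ∂lam with hA_def
  set B : ℝ := ∫ x, g x ∂lam with hB_def
  have hposint : ∀ (u : V → ℝ), (∀ x, 0 < u x) → Integrable u lam → 0 < ∫ x, u x ∂lam := by
    intro u hu hui
    rw [integral_pos_iff_support_of_nonneg (fun x => (hu x).le) hui]
    have hs : Function.support u = Set.univ := by
      ext x; simp [Function.support, (hu x).ne']
    rw [hs]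
    exact Measure.measure_univ_pos.2 hlam
  have hA : 0 < A := hposint f hfpos hfint
  have hB : 0 < B := hposint g hgpos hgint
  -- the tilted probability measure
  set μ : Measure V := lam.withDensity fun x => ENNReal.ofReal (f x) with hμ_def
  have hd_meas : Measurable fun x => ENNReal.ofReal (f x) := hfm.ennreal_ofReal
  have hd_lt : ∀ᵐ x ∂lam, ENNReal.ofReal (f x) < ⊤ :=
    Filter.Eventually.of_forall fun _ => ENNReal.ofReal_lt_top
  have hμuniv : μ Set.univ = ENNReal.ofReal A := by
    rw [hμ_def, withDensity_apply _ MeasurableSet.univ, Measure.restrict_univ,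
      ← ofReal_integral_eq_lintegral_ofReal hfint
        (Filter.Eventually.of_forall fun x => (hfpos x).le)]
  haveI : IsFiniteMeasure μ := ⟨by rw [hμuniv]; exact ENNReal.ofReal_lt_top⟩
  -- integrability of φ and φ^t under μ
  have hφint : Integrable φ μ := by
    rw [hμ_def, integrable_withDensity_iff hd_meas hd_lt]
    refine hgint.congr (Filter.Eventually.of_forall fun x => ?_)
    show g x = φ x * (ENNReal.ofReal (f x)).toReal
    rw [ENNReal.toReal_ofReal (hfpos x).le, hφf x]
  have hφtint : Integrable (fun x => φ x ^ t) μ := by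
    rw [hμ_def, integrable_withDensity_iff hd_meas hd_lt]
    refine Integrable.mono' ((hfint.const_mul (1 - t)).add (hgint.const_mul t))
      ((hφm.pow_const t).mul hd_meas.ennreal_toReal).aestronglyMeasurable
      (Filter.Eventually.of_forall fun x => ?_)
    rw [ENNReal.toReal_ofReal (hfpos x).le, Real.norm_eq_abs,
      abs_of_nonneg (by positivity), hfgt x]
    exact Real.geom_mean_le_arith_mean2_weighted (by linarith) ht0.le (hfpos x).le
      (hgpos x).le (by ring)
  -- integrals under μ
  have hμ_nn : μ = lam.withDensity fun x => ((f x).toNNReal : ENNReal) := rfl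
  have hint_mu : ∀ (u : V → ℝ), ∫ x, u x ∂μ = ∫ x, f x * u x ∂lam := by
    intro u
    rw [hμ_nn, integral_withDensity_eq_integral_smul (f := fun x => (f x).toNNReal) (measurable_real_toNNReal.comp hfm) u]
    refine integral_congr_ae (Filter.Eventually.of_forall fun x => ?_)
    simp [NNReal.smul_def, Real.coe_toNNReal _ (hfpos x).le]
  have hI1 : ∫ x, φ x ∂μ = B := by
    rw [hint_mu, hB_def]
    exact integral_congr_ae (Filter.Eventually.of_forall fun x => by show f x * φ x = g x; rw [mul_comm, hφf x])
  have havg1 : ⨍ x, φ x ∂μ = A⁻¹ * B := by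
    rw [average_eq, measureReal_def, hμuniv, ENNReal.toReal_ofReal hA.le, hI1, smul_eq_mul]
  set It : ℝ := ∫ x, Real.exp (-(((1 - t) • Z₀ + t • Z₁) (Ψ x))) ∂lam with hIt_def
  have hI2 : ∫ x, φ x ^ t ∂μ = It := by
    rw [hint_mu, hIt_def]
    exact integral_congr_ae (Filter.Eventually.of_forall fun x => by
      show f x * φ x ^ t = Real.exp (-(((1 - t) • Z₀ + t • Z₁) (Ψ x))); rw [mul_comm, hφtf x])
  have havg2 : ⨍ x, φ x ^ t ∂μ = A⁻¹ * It := by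
    rw [average_eq, measureReal_def, hμuniv, ENNReal.toReal_ofReal hA.le, hI2, smul_eq_mul]
  -- strict Jensen
  have hcont : ContinuousOn (fun x : ℝ => x ^ t) (Set.Ici 0) := fun x _ =>
    (Real.continuousAt_rpow_const x t (Or.inr ht0.le)).continuousWithinAt
  rcases (Real.strictConcaveOn_rpow ht0 ht1).ae_eq_const_or_lt_map_average hcont isClosed_Ici
      (Filter.Eventually.of_forall fun x => (hφpos x).le) hφint
      (by exact hφtint) with h | h
  · -- constant case: contradicts the hyperplane assumption
    exfalso
    set c : ℝ := ⨍ x, φ x ∂μ with hc_def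
    have hc : ∀ᵐ x ∂lam, φ x = c := by
      have h' := (ae_withDensity_iff hd_meas).1 (hμ_def ▸ h)
      exact h'.mono fun x hx => hx (ENNReal.ofReal_pos.2 (hfpos x)).ne'
    haveI : (ae lam).NeBot := ae_neBot.2 hlam
    obtain ⟨x₀, hx₀⟩ := hc.exists
    refine hhyp ⟨Z₀ - Z₁, Real.log c, sub_ne_zero.2 hZ, hc.mono fun x hx => ?_⟩
    have : Real.log (φ x) = Real.log c := by rw [hx]
    rwa [hφ_def, Real.log_exp] at this
  · -- strict inequality case
    rw [havg2, havg1] at h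
    have hItint : Integrable (fun x => Real.exp (-(((1 - t) • Z₀ + t • Z₁) (Ψ x)))) lam := by
      have := (integrable_withDensity_iff hd_meas hd_lt).1 (hμ_def ▸ hφtint)
      refine this.congr (Filter.Eventually.of_forall fun x => ?_)
      show φ x ^ t * (ENNReal.ofReal (f x)).toReal = Real.exp (-(((1 - t) • Z₀ + t • Z₁) (Ψ x)))
      rw [ENNReal.toReal_ofReal (hfpos x).le, hφtf x]
    have hIt : 0 < It := hposint _ (fun x => Real.exp_pos _) hItint
    have key : It < A ^ (1 - t) * B ^ t := by
      have h2 : A * (A⁻¹ * It) < A * (A⁻¹ * B) ^ t := mul_lt_mul_of_pos_left h hA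
      calc It = A * (A⁻¹ * It) := by field_simp
        _ < A * (A⁻¹ * B) ^ t := h2
        _ = A ^ (1 - t) * B ^ t := by
            rw [Real.mul_rpow (inv_nonneg.2 hA.le) hB.le, Real.inv_rpow hA.le,
              Real.rpow_sub hA, Real.rpow_one]
            field_simp
    calc Real.log It < Real.log (A ^ (1 - t) * B ^ t) := Real.log_lt_log hIt key
      _ = (1 - t) * Real.log A + t * Real.log B := by
          rw [Real.log_mul (by positivity) (by positivity), Real.log_rpow hA, Real.log_rpow hB]
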